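/- Let U be a universal operator on a separable infinite-dimensional complex Hilbert space H and let K = H ⊕ H. Define V ∈ L(K) by V(x,y) = (Ux + y, 0), and for each n ∈ ℕ define V_n ∈ L(K) by V_n(x,y) = (Ux + y, (1/n)x). Then V is universal on K, ‖V_n − V‖ = 1/n for every n, and each V_n is injective and therefore not universal. Consequently, the set of universal operators on K is not open in the operator-norm topology of L(K). -/

import Mathlib

noncomputable section

/-- Universal operator on a complex Hilbert space. -/
def IsUniversal {H : Type*} [NormedAddCommGroup H] [InnerProductSpace ℂ H]
    (U : H →L[ℂ] H) : Prop :=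
  ∀ T : H →L[ℂ] H, ∃ M : Submodule ℂ H, IsClosed (M : Set H) ∧ (∀ x ∈ M, U x ∈ M) ∧
    ∃ c : ℂ, c ≠ 0 ∧ ∃ J : H ≃L[ℂ] M, ∀ x : H, U (J x : H) = c • ((J (T x) : H))

/-- The element `(x, y)` of the Hilbert-space direct sum `H ⊕ H`. -/
def mkPair {H : Type*} [NormedAddCommGroup H] [InnerProductSpace ℂ H] (x y : H) :
    WithLp 2 (H × H) :=
  (WithLp.equiv 2 (H × H)).symm (x, y)

private lemma countable_of_one_le_dist {E : Type*} [MetricSpace E]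
    [TopologicalSpace.SeparableSpace E] {s : Set E}
    (hs : s.Pairwise fun x y => 1 ≤ dist x y) : s.Countable := by
  obtain ⟨t, htc, htd⟩ := TopologicalSpace.exists_countable_dense E
  have h : ∀ x : s, ∃ d : E, d ∈ t ∧ dist (x : E) d < 1/2 := fun x =>
    Metric.mem_closure_iff.mp (htd (x : E)) (1/2) (by norm_num)
  choose f hft hfd using h
  have : Countable t := htc.to_subtype
  rw [← Set.countable_coe_iff]
  refine Function.Injective.countable (f := fun x : s => (⟨f x, hft x⟩ : t)) ?_
  intro x y hxy
  ext
  by_contra hne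
  have h1 := hs x.2 y.2 hne
  have h2 : f x = f y := congrArg Subtype.val hxy
  have h3 : dist (x : E) (f y) < 1/2 := h2 ▸ hfd x
  have h4 : dist (f y) (y : E) < 1/2 := by rw [dist_comm]; exact hfd y
  linarith [dist_triangle (x : E) (f y) (y : E)]

open Submodule in
private lemma exists_l2_repr (E : Type*) [NormedAddCommGroup E] [InnerProductSpace ℂ E]
    [CompleteSpace E] [TopologicalSpace.SeparableSpace E] (hinf : ¬ FiniteDimensional ℂ E) :
    Nonempty (E ≃ₗᵢ[ℂ] lp (fun _ : ℕ => ℂ) 2) := by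
  obtain ⟨w, b, hb⟩ := exists_hilbertBasis ℂ E
  have horth : Orthonormal ℂ ((↑) : w → E) := hb ▸ b.orthonormal
  have hsep : w.Pairwise fun x y => 1 ≤ dist x y := by
    intro x hx y hy hxy
    have hx1 : ‖x‖ = 1 := by simpa using horth.1 ⟨x, hx⟩
    have hy1 : ‖y‖ = 1 := by simpa using horth.1 ⟨y, hy⟩
    have hxyo : (inner ℂ x y : ℂ) = 0 := by
      have := horth.2 (i := ⟨x, hx⟩) (j := ⟨y, hy⟩) (by simpa using hxy)
      simpa using this
    have h2 : ‖x - y‖ ^ 2 = 2 := by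
      rw [@norm_sub_sq ℂ, hxyo, hx1, hy1]; norm_num
    rw [dist_eq_norm]
    nlinarith [norm_nonneg (x - y)]
  have hcnt : w.Countable := countable_of_one_le_dist hsep
  have hspan : (span ℂ w).topologicalClosure = ⊤ := by
    have := b.dense_span
    rwa [hb, Subtype.range_coe] at this
  have hwi : w.Infinite := by
    intro hfin
    apply hinf
    have h1 : FiniteDimensional ℂ (span ℂ w) := FiniteDimensional.span_of_finite ℂ hfin
    have h2 : IsClosed ((span ℂ w : Submodule ℂ E) : Set E) :=
      Submodule.closed_of_finiteDimensional _
    have h3 : span ℂ w = ⊤ := by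
      rw [← hspan, IsClosed.submodule_topologicalClosure_eq h2]
    rw [h3] at h1
    exact Module.Finite.equiv Submodule.topEquiv
  have : Countable w := hcnt.to_subtype
  have : Infinite w := hwi.to_subtype
  have ⟨d⟩ := nonempty_denumerable w
  let e : ℕ ≃ w := (Denumerable.eqv w).symm
  have hw : Orthonormal ℂ (((↑) : w → E) ∘ e) := horth.comp e e.injective
  have hrange : Set.range (((↑) : w → E) ∘ e) = w := by
    rw [Set.range_comp, e.range_eq_univ, Set.image_univ, Subtype.range_coe]
  have hsp : ⊤ ≤ (span ℂ (Set.range (((↑) : w → E) ∘ e))).topologicalClosure := by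
    rw [hrange, hspan]
  exact ⟨(HilbertBasis.mk hw hsp).repr⟩

private lemma not_isUniversal_of_injective {E : Type*} [NormedAddCommGroup E]
    [InnerProductSpace ℂ E] [Nontrivial E] (W : E →L[ℂ] E)
    (hW : Function.Injective W) : ¬ IsUniversal W := by
  intro h
  obtain ⟨M, _, _, c, hc, J, hJ⟩ := h 0
  obtain ⟨x, hx⟩ := exists_ne (0 : E)
  have h1 : W (J x : E) = 0 := by rw [hJ]; simp
  have h2 : (J x : E) = 0 := hW (h1.trans (map_zero W).symm)
  have h3 : J x = 0 := Subtype.ext h2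
  exact hx (J.injective (h3.trans (map_zero J).symm))

private lemma isUniversal_of_embed {H K : Type*} [NormedAddCommGroup H] [InnerProductSpace ℂ H]
    [NormedAddCommGroup K] [InnerProductSpace ℂ K] [CompleteSpace H]
    (U : H →L[ℂ] H) (hU : IsUniversal U) (V : K →L[ℂ] K)
    (i : H →ₗᵢ[ℂ] K) (hi : ∀ x, V (i x) = i (U x))
    (φ : K ≃L[ℂ] H) : IsUniversal V := by
  intro T
  obtain ⟨M', hM'cl, hM'inv, c, hc, J', hJ'⟩ :=
    hU ((φ : K →L[ℂ] H).comp (T.comp (φ.symm : H →L[ℂ] K)))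
  refine ⟨M'.map i.toLinearMap, ?_, ?_, c, hc, ?_⟩
  · have h1 : IsComplete (M' : Set H) := hM'cl.isComplete
    have h2 : IsComplete (i '' (M' : Set H)) :=
      (isComplete_image_iff i.isometry.isUniformInducing).mpr h1
    exact h2.isClosed
  · rintro x ⟨m, hm, rfl⟩
    exact ⟨U m, hM'inv m hm, (hi m).symm⟩
  · let em : M' ≃ₗᵢ[ℂ] (M'.map i.toLinearMap) :=
      { Submodule.equivMapOfInjective i.toLinearMap i.injective M' with
        norm_map' := fun x => by
          have : ((Submodule.equivMapOfInjective i.toLinearMap i.injective M' x : K)) = i (x : H) := rfl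
          rw [show ‖(Submodule.equivMapOfInjective i.toLinearMap i.injective M' x)‖ = ‖(Submodule.equivMapOfInjective i.toLinearMap i.injective M' x : K)‖ from rfl, this, i.norm_map]; rfl }
    refine ⟨(φ.trans J').trans em.toContinuousLinearEquiv, fun z => ?_⟩
    have hcoe : ∀ y : K, ((((φ.trans J').trans em.toContinuousLinearEquiv) y : _) : K)
        = i ((J' (φ y) : H)) := fun _ => rfl
    rw [hcoe, hcoe, hi, hJ']
    simp only [ContinuousLinearMap.comp_apply, ContinuousLinearEquiv.coe_coe,
      φ.symm_apply_apply]
    rw [map_smul]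

section PairLemmas
variable {H : Type*} [NormedAddCommGroup H] [InnerProductSpace ℂ H]

private lemma mkPair_surj (z : WithLp 2 (H × H)) :
    z = mkPair (WithLp.equiv 2 (H × H) z).1 (WithLp.equiv 2 (H × H) z).2 := rfl

private lemma mkPair_sub (a b c d : H) : mkPair a b - mkPair c d = mkPair (a - c) (b - d) := rfl

private lemma mkPair_zero : (mkPair (0 : H) 0) = 0 := rfl

private lemma norm_mkPair (x y : H) : ‖mkPair x y‖ = Real.sqrt (‖x‖ ^ 2 + ‖y‖ ^ 2) := by
  rw [mkPair, WithLp.prod_norm_eq_of_L2]; rfl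

private lemma mkPair_inj (a b c d : H) (h : mkPair a b = mkPair c d) : a = c ∧ b = d := by
  have := (WithLp.equiv 2 (H × H)).symm.injective h
  exact ⟨congrArg Prod.fst this, congrArg Prod.snd this⟩

private lemma norm_mkPair_left (x : H) : ‖mkPair x (0 : H)‖ = ‖x‖ := by
  rw [norm_mkPair]; simp [Real.sqrt_sq_eq_abs]

private lemma norm_mkPair_right (y : H) : ‖mkPair (0 : H) y‖ = ‖y‖ := by
  rw [norm_mkPair]; simp [Real.sqrt_sq_eq_abs]

private lemma norm_fst_le_pair (x y : H) : ‖x‖ ≤ ‖mkPair x y‖ := by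
  calc ‖x‖ = Real.sqrt (‖x‖ ^ 2) := (Real.sqrt_sq (norm_nonneg x)).symm
    _ ≤ Real.sqrt (‖x‖ ^ 2 + ‖y‖ ^ 2) :=
        Real.sqrt_le_sqrt (le_add_of_nonneg_right (sq_nonneg _))
    _ = ‖mkPair x y‖ := (norm_mkPair x y).symm

end PairLemmas

/-- Let `U` be universal on `H` and, on `K = H ⊕ H`, let `V (x,y) = (U x + y, 0)` and
`V_n (x,y) = (U x + y, (1/n) x)`. Then `V` is universal, `‖V_n - V‖ = 1/n`, each `V_n` is
injective, hence not universal; consequently the set of universal operators on `K` is not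
open in the operator norm. -/
theorem universal_not_open {H : Type*} [NormedAddCommGroup H]
    [InnerProductSpace ℂ H] [CompleteSpace H] [TopologicalSpace.SeparableSpace H]
    (hinf : ¬ FiniteDimensional ℂ H)
    (U : H →L[ℂ] H) (hU : IsUniversal U)
    (V : WithLp 2 (H × H) →L[ℂ] WithLp 2 (H × H))
    (Vn : ℕ → (WithLp 2 (H × H) →L[ℂ] WithLp 2 (H × H)))
    (hV : ∀ x y : H, V (mkPair x y) = mkPair (U x + y) 0)
    (hVn : ∀ n : ℕ, ∀ x y : H, Vn n (mkPair x y) = mkPair (U x + y) (((n : ℂ))⁻¹ • x)) :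
    IsUniversal V ∧
    (∀ n : ℕ, 0 < n →
      ‖Vn n - V‖ = 1 / (n : ℝ) ∧ Function.Injective (Vn n) ∧ ¬ IsUniversal (Vn n)) ∧
    ¬ IsOpen {W : WithLp 2 (H × H) →L[ℂ] WithLp 2 (H × H) | IsUniversal W} := by
  haveI hKsep : TopologicalSpace.SeparableSpace (WithLp 2 (H × H)) :=
    inferInstance
  have hntH : Nontrivial H := by
    by_contra hn
    rw [not_nontrivial_iff_subsingleton] at hn
    exact hinf inferInstance
  haveI hntK : Nontrivial (WithLp 2 (H × H)) := inferInstance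
  -- the isometric embedding x ↦ (x, 0)
  let i0 : H →ₗ[ℂ] WithLp 2 (H × H) :=
    (WithLp.linearEquiv 2 ℂ (H × H)).symm.toLinearMap ∘ₗ LinearMap.inl ℂ H H
  have hi0 : ∀ x : H, i0 x = mkPair x 0 := fun _ => rfl
  let i : H →ₗᵢ[ℂ] WithLp 2 (H × H) :=
    ⟨i0, fun x => by rw [hi0 x]; exact norm_mkPair_left x⟩
  have hi : ∀ x : H, V (i x) = i (U x) := by
    intro x
    show V (i0 x) = i0 (U x)
    rw [hi0, hi0, hV x 0, add_zero]
  have hinfK : ¬ FiniteDimensional ℂ (WithLp 2 (H × H)) := fun h =>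
    hinf (FiniteDimensional.of_injective i.toLinearMap i.injective)
  obtain ⟨eH⟩ := exists_l2_repr H hinf
  obtain ⟨eK⟩ := exists_l2_repr (WithLp 2 (H × H)) hinfK
  let φ : WithLp 2 (H × H) ≃L[ℂ] H := (eK.trans eH.symm).toContinuousLinearEquiv
  have part1 : IsUniversal V := isUniversal_of_embed U hU V i hi φ
  have part2 : ∀ n : ℕ, 0 < n →
      ‖Vn n - V‖ = 1 / (n : ℝ) ∧ Function.Injective (Vn n) ∧ ¬ IsUniversal (Vn n) := by
    intro n hn
    have hnC : ((n : ℂ))⁻¹ ≠ 0 :=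
      inv_ne_zero (by exact_mod_cast hn.ne')
    have hD : ∀ x y : H, (Vn n - V) (mkPair x y) = mkPair 0 (((n : ℂ))⁻¹ • x) := by
      intro x y
      rw [ContinuousLinearMap.sub_apply, hVn, hV, mkPair_sub, sub_self, sub_zero]
    have hDnorm : ∀ x y : H, ‖(Vn n - V) (mkPair x y)‖ = (n : ℝ)⁻¹ * ‖x‖ := by
      intro x y
      rw [hD, norm_mkPair_right, norm_smul]
      congr 1
      simp
    have hinj : Function.Injective (Vn n) := by
      have hker : ∀ z : WithLp 2 (H × H), Vn n z = 0 → z = 0 := by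
        intro z hz
        rw [mkPair_surj z] at hz ⊢
        rw [hVn, ← mkPair_zero] at hz
        obtain ⟨h1, h2⟩ := mkPair_inj _ _ _ _ hz
        have hx : (WithLp.equiv 2 (H × H) z).1 = 0 := by
          have := smul_eq_zero.mp h2
          tauto
        have hy : (WithLp.equiv 2 (H × H) z).2 = 0 := by
          rw [hx, map_zero, zero_add] at h1
          exact h1
        rw [hx, hy, mkPair_zero]
      intro a b hab
      have : Vn n (a - b) = 0 := by rw [map_sub, hab, sub_self]
      have := hker _ this
      exact sub_eq_zero.mp this
    have hnorm : ‖Vn n - V‖ = 1 / (n : ℝ) := by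
      have hnR : (0 : ℝ) < (n : ℝ) := by exact_mod_cast hn
      refine le_antisymm ?_ ?_
      · refine ContinuousLinearMap.opNorm_le_bound _ (by positivity) (fun z => ?_)
        conv_lhs => rw [mkPair_surj z]
        rw [hDnorm, one_div]
        have h1 : ‖(WithLp.equiv 2 (H × H) z).1‖ ≤ ‖z‖ := by
          conv_rhs => rw [mkPair_surj z]
          exact norm_fst_le_pair _ _
        gcongr
      · obtain ⟨x₀, hx₀⟩ := exists_ne (0 : H)
        have h1 := ContinuousLinearMap.ratio_le_opNorm (Vn n - V) (mkPair x₀ 0)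
        rw [hDnorm x₀ 0, norm_mkPair_left] at h1
        have hx₀n : (0 : ℝ) < ‖x₀‖ := norm_pos_iff.mpr hx₀
        calc 1 / (n : ℝ) = ((n : ℝ)⁻¹ * ‖x₀‖) / ‖x₀‖ := by field_simp
          _ ≤ ‖Vn n - V‖ := h1
    exact ⟨hnorm, hinj, not_isUniversal_of_injective _ hinj⟩
  refine ⟨part1, part2, ?_⟩
  intro hopen
  obtain ⟨ε, hε, hball⟩ := Metric.isOpen_iff.mp hopen V part1
  obtain ⟨n, hnε⟩ := exists_nat_one_div_lt hε
  obtain ⟨hnorm, _, hnotU⟩ := part2 (n + 1) n.succ_pos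
  apply hnotU
  apply hball
  rw [Metric.mem_ball, dist_eq_norm, hnorm]
  exact_mod_cast hnε

end
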